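/- Let H be a complex Hilbert space, M ⊆ B(H) a von Neumann algebra, M_{sa} = {x ∈ M : x* = x} its self-adjoint part (a real Banach space), and M_*^{sa} = {ω ∈ M_* : ω(x*) = conjugate of ω(x) for all x ∈ M} the self-adjoint part of the predual (a real Banach space). Then the map Ψ : M_{sa} → (M_*^{sa})* defined by Ψ(x)(ω) = Re(ω(x)) is a surjective real-linear isometry onto the dual of the real Banach space M_*^{sa}. -/

import Mathlib

set_option synthInstance.maxHeartbeats 1000000
set_option maxHeartbeats 1000000

noncomputable section

namespace Paper

open scoped ComplexConjugate

variable {H : Type*} [NormedAddCommGroup H] [InnerProductSpace ℂ H] [CompleteSpace H]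

variable (M : VonNeumannAlgebra H)

/-- The von Neumann algebra `M` regarded as a closed subspace of `B(H)`;
its subtype `↥(carrier M)` is the Banach space `M`. -/
def carrier : Submodule ℂ (H →L[ℂ] H) := M.toStarSubalgebra.toSubalgebra.toSubmodule

theorem mem_carrier {x : H →L[ℂ] H} : x ∈ carrier M ↔ x ∈ M := Iff.rfl

instance (priority := 10000) : NormedAddCommGroup ↥(carrier M) := inferInstance
instance (priority := 10000) : NormedSpace ℂ ↥(carrier M) := inferInstance
instance (priority := 10000) : NormedAddCommGroup (↥(carrier M) →L[ℂ] ℂ) := inferInstance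
instance (priority := 10000) : NormedSpace ℂ (↥(carrier M) →L[ℂ] ℂ) := inferInstance
instance (priority := 10000) : ContinuousAdd (↥(carrier M) →L[ℂ] ℂ) := by
  have h : IsTopologicalAddGroup (↥(carrier M) →L[ℂ] ℂ) := inferInstance
  exact h.toContinuousAdd

/-- The vector functional `ω_{ξ,η} : x ↦ ⟪x ξ, η⟫` (inner ℂ product linear in the first slot,
i.e. `⟪u, v⟫ = inner ℂ v u` in Mathlib's convention), as a continuous linear functional on `M`. -/
def vecFunctional (ξ η : H) : ↥(carrier M) →L[ℂ] ℂ :=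
  (innerSL ℂ η).comp ((ContinuousLinearMap.apply ℂ H ξ).comp (carrier M).subtypeL)

theorem vecFunctional_apply (ξ η : H) (x : ↥(carrier M)) :
    vecFunctional M ξ η x = inner ℂ η ((x : H →L[ℂ] H) ξ) := rfl

/-- The predual `M_*` of `M`: the norm-closed linear span, inside the dual of `M`,
of the vector functionals `ω_{ξ,η}`. -/
def predual : Submodule ℂ (↥(carrier M) →L[ℂ] ℂ) :=
  (Submodule.span ℂ {φ | ∃ ξ η : H, φ = vecFunctional M ξ η}).topologicalClosure

theorem vecFunctional_mem_predual (ξ η : H) : vecFunctional M ξ η ∈ predual M :=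
  Submodule.le_topologicalClosure _ (Submodule.subset_span ⟨ξ, η, rfl⟩)

instance (priority := 10000) : NormedAddCommGroup ↥(predual M) := inferInstance
instance (priority := 10000) : NormedSpace ℂ ↥(predual M) := inferInstance
instance (priority := 10000) : NormedSpace ℝ ↥(predual M) := inferInstance
instance (priority := 10000) : NormedAddCommGroup (↥(predual M) →L[ℂ] ℂ) := inferInstance
instance (priority := 10000) : NormedSpace ℂ (↥(predual M) →L[ℂ] ℂ) := inferInstance

/-- a projection belonging to `M` -/
def IsProjectionIn (p : H →L[ℂ] H) : Prop := p ∈ M ∧ IsSelfAdjoint p ∧ p * p = p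

/-- `M` is σ-finite: every family of pairwise orthogonal nonzero projections in `M`
is countable. -/
def SigmaFinite : Prop :=
  ∀ P : Set (H →L[ℂ] H),
    (∀ p ∈ P, IsProjectionIn M p ∧ p ≠ 0) →
    (∀ p ∈ P, ∀ q ∈ P, p ≠ q → p * q = 0) →
    P.Countable

/-- A projection `q ∈ M` is σ-finite if every family of pairwise orthogonal nonzero
projections `p ∈ M` with `p = q p q` is countable. -/
def IsSigmaFiniteProjection (q : H →L[ℂ] H) : Prop :=
  IsProjectionIn M q ∧
    ∀ P : Set (H →L[ℂ] H),
      (∀ p ∈ P, IsProjectionIn M p ∧ p ≠ 0 ∧ p = q * p * q) →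
      (∀ p ∈ P, ∀ r ∈ P, p ≠ r → p * r = 0) →
      P.Countable

/-- `ξ` is a generating vector for the projection `p ∈ M`:
the set `M'ξ = {a ξ : a ∈ M'}` is dense in `pH`, the range of `p`. -/
def IsGeneratingVector (p : H →L[ℂ] H) (ξ : H) : Prop :=
  closure {v : H | ∃ a ∈ M.commutant, v = a ξ} = Set.range p

/-- a cyclic projection in `M` -/
def IsCyclicProjection (p : H →L[ℂ] H) : Prop :=
  IsProjectionIn M p ∧ ∃ ξ : H, IsGeneratingVector M p ξ

/-- The self-adjoint part `M_*^{sa}` of the predual: those `ω ∈ M_*` with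
`ω (x*) = conj (ω x)` for all `x ∈ M`; a real-linear subspace of `M_*`. -/
def predualSA : Submodule ℝ ↥(predual M) where
  carrier := {ω | ∀ (x : H →L[ℂ] H) (hx : x ∈ M),
    (ω : ↥(carrier M) →L[ℂ] ℂ) ⟨star x, (mem_carrier M).mpr (star_mem hx)⟩ =
      conj ((ω : ↥(carrier M) →L[ℂ] ℂ) ⟨x, hx⟩)}
  add_mem' := by
    intro a b ha hb x hx
    simp only [Submodule.coe_add, ContinuousLinearMap.add_apply, ha x hx, hb x hx, map_add]
  zero_mem' := by
    intro x hx
    simp only [ZeroMemClass.coe_zero, ContinuousLinearMap.zero_apply, map_zero]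
  smul_mem' := by
    intro r ω hω x hx
    simp only [SetLike.val_smul_of_tower, ContinuousLinearMap.coe_smul', Pi.smul_apply, hω x hx]
    rw [show (conj ((ω : ↥(carrier M) →L[ℂ] ℂ) ⟨x, hx⟩)) = star ((ω : ↥(carrier M) →L[ℂ] ℂ) ⟨x, hx⟩) from rfl,
      show (conj (r • (ω : ↥(carrier M) →L[ℂ] ℂ) ⟨x, hx⟩)) = star (r • (ω : ↥(carrier M) →L[ℂ] ℂ) ⟨x, hx⟩) from rfl,
      star_smul, star_trivial r]

instance (priority := 10000) : NormedAddCommGroup ↥(predualSA M) := inferInstance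
instance (priority := 10000) : NormedSpace ℝ ↥(predualSA M) := inferInstance
instance (priority := 10000) : NormedAddCommGroup (↥(predualSA M) →L[ℝ] ℝ) := inferInstance
instance (priority := 10000) : NormedSpace ℝ (↥(predualSA M) →L[ℝ] ℝ) := inferInstance


set_option linter.unusedSectionVars false


lemma numrad_sq_bound {T : H →L[ℂ] H} {S : ℝ}
    (h : ∀ ξ : H, ‖ξ‖ ≤ 1 → ‖(inner ℂ ξ (T ξ) : ℂ)‖ ≤ S) (z : H) :
    ‖(inner ℂ z (T z) : ℂ)‖ ≤ S * (‖z‖ * ‖z‖) := by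
  rcases eq_or_ne z 0 with rfl | hz
  · simp
  · have hz' : (0:ℝ) < ‖z‖ := norm_pos_iff.mpr hz
    set c : ℂ := (‖z‖ : ℂ)⁻¹ with hc
    have hcn : ‖c • z‖ = 1 := by
      simp [hc, norm_smul, inv_mul_cancel₀ hz'.ne']
    have h1 := h (c • z) (le_of_eq hcn)
    have h2 : (inner ℂ (c • z) (T (c • z)) : ℂ) = c * c * inner ℂ z (T z) := by
      rw [map_smul, inner_smul_left, inner_smul_right, hc, map_inv₀, Complex.conj_ofReal]
      ring
    rw [h2] at h1
    have h3 : ‖c * c * (inner ℂ z (T z) : ℂ)‖ = (‖z‖)⁻¹ * (‖z‖)⁻¹ * ‖(inner ℂ z (T z) : ℂ)‖ := by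
      simp [hc, norm_mul]
    rw [h3] at h1
    have h4 := mul_le_mul_of_nonneg_left h1 (le_of_lt (mul_pos hz' hz'))
    calc ‖(inner ℂ z (T z) : ℂ)‖ = (‖z‖ * ‖z‖) * ((‖z‖)⁻¹ * (‖z‖)⁻¹ * ‖(inner ℂ z (T z) : ℂ)‖) := by
          field_simp
      _ ≤ (‖z‖ * ‖z‖) * S := h4
      _ = S * (‖z‖ * ‖z‖) := by ring

lemma re_inner_bound {T : H →L[ℂ] H} (hT : IsSelfAdjoint T) {S : ℝ}
    (h : ∀ ξ : H, ‖ξ‖ ≤ 1 → ‖(inner ℂ ξ (T ξ) : ℂ)‖ ≤ S) {x y : H}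
    (hx : ‖x‖ ≤ 1) (hy : ‖y‖ ≤ 1) : ((inner ℂ y (T x) : ℂ)).re ≤ S := by
  have hS : 0 ≤ S := le_trans (by simp) (h 0 (by simp))
  have hsym0 := (ContinuousLinearMap.isSelfAdjoint_iff_isSymmetric.mp hT)
  have hsym : ∀ a b : H, (inner ℂ (T a) b : ℂ) = inner ℂ a (T b) := fun a b => hsym0 a b
  have key : (inner ℂ (x+y) (T (x+y)) : ℂ) - inner ℂ (x-y) (T (x-y))
      = 2 * ((inner ℂ x (T y) : ℂ) + inner ℂ y (T x)) := by
    rw [map_add, map_sub, inner_add_left, inner_add_right, inner_add_right,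
      inner_sub_left, inner_sub_right, inner_sub_right]
    ring
  have hxy : (inner ℂ x (T y) : ℂ) = conj (inner ℂ y (T x) : ℂ) := by
    rw [← hsym x y]
    exact (inner_conj_symm _ _).symm
  have hadd := Complex.add_conj (inner ℂ y (T x) : ℂ)
  have key2 : (inner ℂ (x+y) (T (x+y)) : ℂ) - inner ℂ (x-y) (T (x-y))
      = ((4 * ((inner ℂ y (T x) : ℂ)).re : ℝ) : ℂ) := by
    rw [key, hxy]
    push_cast at hadd ⊢
    linear_combination 2 * hadd
  have h4 : 4 * ((inner ℂ y (T x) : ℂ)).re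
      = ((inner ℂ (x+y) (T (x+y)) : ℂ) - inner ℂ (x-y) (T (x-y))).re := by
    rw [key2]; simp
  have hA := numrad_sq_bound h (x + y)
  have hB := numrad_sq_bound h (x - y)
  have hre : ((inner ℂ (x+y) (T (x+y)) : ℂ) - inner ℂ (x-y) (T (x-y))).re
      ≤ ‖(inner ℂ (x+y) (T (x+y)) : ℂ)‖ + ‖(inner ℂ (x-y) (T (x-y)) : ℂ)‖ :=
    le_trans (Complex.re_le_norm _) (le_trans le_rfl (norm_sub_le _ _))
  have hpar := parallelogram_law_with_norm ℂ x y
  have hx2 : ‖x‖ * ‖x‖ ≤ 1 := mul_le_one₀ hx (norm_nonneg x) hx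
  have hy2 : ‖y‖ * ‖y‖ ≤ 1 := mul_le_one₀ hy (norm_nonneg y) hy
  nlinarith [mul_le_mul_of_nonneg_left (le_of_eq hpar) hS,
    mul_le_mul_of_nonneg_left (ge_of_eq hpar) hS,
    mul_le_mul_of_nonneg_left (add_le_add hx2 hy2) hS]

lemma norm_le_of_sa {T : H →L[ℂ] H} (hT : IsSelfAdjoint T) {S : ℝ}
    (h : ∀ ξ : H, ‖ξ‖ ≤ 1 → ‖(inner ℂ ξ (T ξ) : ℂ)‖ ≤ S) : ‖T‖ ≤ S := by
  have hS : 0 ≤ S := le_trans (by simp) (h 0 (by simp))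
  have main : ∀ u : H, ‖u‖ ≤ 1 → ‖T u‖ ≤ S := by
    intro u hu
    rcases eq_or_ne (T u) 0 with h0 | h0
    · rw [h0]; simpa using hS
    · have hTu : (0:ℝ) < ‖T u‖ := norm_pos_iff.mpr h0
      set y : H := ((‖T u‖ : ℂ))⁻¹ • T u with hy
      have hyn : ‖y‖ ≤ 1 := by
        rw [hy]; simp [norm_smul, inv_mul_cancel₀ hTu.ne']
      have hre : ((inner ℂ y (T u) : ℂ)).re = ‖T u‖ := by
        rw [hy, inner_smul_left, map_inv₀, Complex.conj_ofReal]
        have hinner : (inner ℂ (T u) (T u) : ℂ) = ((‖T u‖ ^ 2 : ℝ) : ℂ) := by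
          rw [inner_self_eq_norm_sq_to_K]; norm_cast
        rw [hinner, ← Complex.ofReal_inv, ← Complex.ofReal_mul, Complex.ofReal_re, pow_two]
        field_simp
      have := re_inner_bound hT h hu hyn
      rw [hre] at this
      exact this
  refine T.opNorm_le_bound hS fun x => ?_
  rcases eq_or_ne x 0 with rfl | hx0
  · simp
  · have hx' : (0:ℝ) < ‖x‖ := norm_pos_iff.mpr hx0
    have h1 : ‖T (((‖x‖:ℂ))⁻¹ • x)‖ ≤ S := by
      refine main _ ?_
      simp [norm_smul, inv_mul_cancel₀ hx'.ne']
    rw [map_smul, norm_smul] at h1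
    simp only [norm_inv, Complex.norm_real, norm_norm] at h1
    rw [inv_mul_le_iff₀ hx'] at h1
    linarith [h1]


/-- star on the carrier subtype -/
def mstar (x : ↥(carrier M)) : ↥(carrier M) :=
  ⟨star (x : H →L[ℂ] H), (mem_carrier M).mpr (star_mem ((mem_carrier M).mp x.2))⟩

theorem mstar_add (x y : ↥(carrier M)) : mstar M (x + y) = mstar M x + mstar M y :=
  Subtype.ext (by simp [mstar, star_add])

theorem mstar_smul (c : ℂ) (x : ↥(carrier M)) : mstar M (c • x) = conj c • mstar M x :=
  Subtype.ext (by simp [mstar, star_smul])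

theorem norm_mstar (x : ↥(carrier M)) : ‖mstar M x‖ = ‖x‖ := norm_star (x : H →L[ℂ] H)

/-- ω ↦ (x ↦ conj (ω x*)) as a linear map -/
def starOmegaLM (ω : ↥(carrier M) →L[ℂ] ℂ) : ↥(carrier M) →ₗ[ℂ] ℂ where
  toFun x := conj (ω (mstar M x))
  map_add' x y := by
    show conj (ω (mstar M (x + y))) = conj (ω (mstar M x)) + conj (ω (mstar M y))
    rw [mstar_add, map_add, map_add]
  map_smul' c x := by
    show conj (ω (mstar M (c • x))) = (RingHom.id ℂ) c • conj (ω (mstar M x))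
    rw [mstar_smul, map_smul, smul_eq_mul, map_mul, Complex.conj_conj, RingHom.id_apply,
      smul_eq_mul]

def starOmega (ω : ↥(carrier M) →L[ℂ] ℂ) : ↥(carrier M) →L[ℂ] ℂ :=
  LinearMap.mkContinuous (starOmegaLM M ω) ‖ω‖ (fun x => by
    show ‖conj (ω (mstar M x))‖ ≤ ‖ω‖ * ‖x‖
    rw [RCLike.norm_conj, ← norm_mstar M x]
    exact ω.le_opNorm _)

theorem starOmega_apply (ω : ↥(carrier M) →L[ℂ] ℂ) (x : ↥(carrier M)) :
    starOmega M ω x = conj (ω (mstar M x)) := rfl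

theorem norm_starOmega_le (ω : ↥(carrier M) →L[ℂ] ℂ) : ‖starOmega M ω‖ ≤ ‖ω‖ :=
  LinearMap.mkContinuous_norm_le _ (norm_nonneg ω) _

theorem starOmega_add (ω ψ : ↥(carrier M) →L[ℂ] ℂ) :
    starOmega M (ω + ψ) = starOmega M ω + starOmega M ψ := by
  ext x; simp [starOmega_apply]

theorem starOmega_smul (c : ℂ) (ω : ↥(carrier M) →L[ℂ] ℂ) :
    starOmega M (c • ω) = conj c • starOmega M ω := by
  ext x; simp [starOmega_apply]

theorem starOmega_starOmega (ω : ↥(carrier M) →L[ℂ] ℂ) :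
    starOmega M (starOmega M ω) = ω := by
  ext x
  have : mstar M (mstar M x) = x := Subtype.ext (star_star _)
  simp [starOmega_apply, this]

theorem starOmega_sub (ω ψ : ↥(carrier M) →L[ℂ] ℂ) :
    starOmega M (ω - ψ) = starOmega M ω - starOmega M ψ := by
  ext x; simp [starOmega_apply]

theorem starOmega_continuous : Continuous (starOmega M) := by
  refine (LipschitzWith.of_dist_le_mul (K := 1) fun a b => ?_).continuous
  rw [dist_eq_norm, dist_eq_norm, ← starOmega_sub, NNReal.coe_one, one_mul]
  exact norm_starOmega_le M _

theorem starOmega_vecFunctional (ξ η : H) :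
    starOmega M (vecFunctional M ξ η) = vecFunctional M η ξ := by
  ext x
  rw [starOmega_apply, vecFunctional_apply, vecFunctional_apply]
  have : ((mstar M x : H →L[ℂ] H)) = ContinuousLinearMap.adjoint (x : H →L[ℂ] H) :=
    ContinuousLinearMap.star_eq_adjoint _
  rw [this, ← inner_conj_symm, Complex.conj_conj, ContinuousLinearMap.adjoint_inner_left]

/-- the generating set of the predual -/
def vfSet : Set (↥(carrier M) →L[ℂ] ℂ) := {φ | ∃ ξ η : H, φ = vecFunctional M ξ η}

theorem predual_eq : predual M = (Submodule.span ℂ (vfSet M)).topologicalClosure := rfl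

theorem span_le_predual : Submodule.span ℂ (vfSet M) ≤ predual M :=
  Submodule.le_topologicalClosure _

theorem starOmega_mem_predual {ω : ↥(carrier M) →L[ℂ] ℂ} (hω : ω ∈ predual M) :
    starOmega M ω ∈ predual M := by
  have hmaps : Set.MapsTo (starOmega M) (Submodule.span ℂ (vfSet M) : Set _)
      (predual M : Set _) := by
    intro φ hφ
    refine Submodule.span_induction (p := fun φ _ => starOmega M φ ∈ predual M)
      ?_ ?_ ?_ ?_ hφ
    · rintro ψ ⟨ξ, η, rfl⟩
      rw [starOmega_vecFunctional]
      exact vecFunctional_mem_predual M η ξ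
    · show starOmega M 0 ∈ predual M
      have : starOmega M 0 = 0 := by ext x; simp [starOmega_apply]
      rw [this]; exact zero_mem _
    · intro a b _ _ ha hb
      show starOmega M (a + b) ∈ predual M
      rw [starOmega_add]; exact add_mem ha hb
    · intro c a _ ha
      show starOmega M (c • a) ∈ predual M
      rw [starOmega_smul]; exact Submodule.smul_mem _ _ ha
  have hcl : ω ∈ closure (Submodule.span ℂ (vfSet M) : Set _) := hω
  have h3 := map_mem_closure (starOmega_continuous M) hcl hmaps
  have hclosed : IsClosed ((predual M : Set (↥(carrier M) →L[ℂ] ℂ))) :=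
    Submodule.isClosed_topologicalClosure _
  rwa [hclosed.closure_eq] at h3

/-- star on the predual subtype -/
def pstar (ω : ↥(predual M)) : ↥(predual M) :=
  ⟨starOmega M ↑ω, starOmega_mem_predual M ω.2⟩

theorem pstar_add (a b : ↥(predual M)) : pstar M (a + b) = pstar M a + pstar M b :=
  Subtype.ext (starOmega_add M _ _)

theorem pstar_smul (c : ℂ) (a : ↥(predual M)) : pstar M (c • a) = conj c • pstar M a :=
  Subtype.ext (starOmega_smul M _ _)

theorem pstar_pstar (a : ↥(predual M)) : pstar M (pstar M a) = a :=
  Subtype.ext (starOmega_starOmega M _)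

theorem pstar_sub (a b : ↥(predual M)) : pstar M (a - b) = pstar M a - pstar M b :=
  Subtype.ext (starOmega_sub M _ _)

theorem norm_pstar_le (a : ↥(predual M)) : ‖pstar M a‖ ≤ ‖a‖ := norm_starOmega_le M _

theorem mem_predualSA_iff {ω : ↥(predual M)} : ω ∈ predualSA M ↔ pstar M ω = ω := by
  constructor
  · intro hω
    refine Subtype.ext (ContinuousLinearMap.ext fun x => ?_)
    show conj ((ω : ↥(carrier M) →L[ℂ] ℂ) (mstar M x)) = (ω : ↥(carrier M) →L[ℂ] ℂ) x
    have h1 := hω (x : H →L[ℂ] H) x.2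
    have hx : (⟨(x : H →L[ℂ] H), x.2⟩ : ↥(carrier M)) = x := rfl
    rw [hx] at h1
    have hmx : mstar M x = ⟨star (x : H →L[ℂ] H),
        (mem_carrier M).mpr (star_mem ((mem_carrier M).mp x.2))⟩ := rfl
    rw [hmx, h1, Complex.conj_conj]
  · intro hω x hx
    have hval : starOmega M ↑ω = (ω : ↥(carrier M) →L[ℂ] ℂ) := congrArg Subtype.val hω
    have h2 := DFunLike.congr_fun hval ⟨x, hx⟩
    rw [starOmega_apply] at h2
    rw [← h2, Complex.conj_conj]
    rfl

theorem real_smul_predual (r : ℝ) (x : ↥(predual M)) : (r : ℂ) • x = r • x := rfl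

/-- first self-adjoint part -/
def sigma1 (ω : ↥(predual M)) : ↥(predual M) := ((2 : ℂ))⁻¹ • (ω + pstar M ω)

/-- second self-adjoint part -/
def sigma2 (ω : ↥(predual M)) : ↥(predual M) := (-(Complex.I) / 2) • (ω - pstar M ω)

theorem conj_two_inv : conj ((2 : ℂ))⁻¹ = ((2 : ℂ))⁻¹ := by
  simp [Complex.ext_iff]

theorem conj_c2 : conj (-(Complex.I) / 2) = -(-(Complex.I) / 2) := by
  have : ((2:ℂ)) = ((2:ℝ):ℂ) := by norm_num
  rw [map_div₀, map_neg, Complex.conj_I, this, Complex.conj_ofReal]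
  ring

theorem sigma1_mem (ω : ↥(predual M)) : sigma1 M ω ∈ predualSA M := by
  rw [mem_predualSA_iff, sigma1, pstar_smul, pstar_add, pstar_pstar, conj_two_inv, add_comm]

theorem sigma2_mem (ω : ↥(predual M)) : sigma2 M ω ∈ predualSA M := by
  rw [mem_predualSA_iff, sigma2, pstar_smul, pstar_sub M ω, pstar_pstar, conj_c2]
  module

theorem sigma_recomp (ω : ↥(predual M)) :
    sigma1 M ω + Complex.I • sigma2 M ω = ω := by
  have hI : Complex.I • sigma2 M ω = ((2 : ℂ))⁻¹ • (ω - pstar M ω) := by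
    rw [sigma2, smul_smul]
    congr 1
    rw [div_eq_mul_inv, neg_mul, mul_neg, ← mul_assoc, Complex.I_mul_I]
    norm_num
  rw [hI, sigma1]
  module

theorem sigma1_add (a b : ↥(predual M)) :
    sigma1 M (a + b) = sigma1 M a + sigma1 M b := by
  rw [sigma1, sigma1, sigma1, pstar_add]
  module

theorem sigma2_add (a b : ↥(predual M)) :
    sigma2 M (a + b) = sigma2 M a + sigma2 M b := by
  rw [sigma2, sigma2, sigma2, pstar_add]
  module

theorem sigma1_real_smul (r : ℝ) (ω : ↥(predual M)) :
    sigma1 M ((r : ℂ) • ω) = (r : ℂ) • sigma1 M ω := by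
  rw [sigma1, sigma1, pstar_smul, Complex.conj_ofReal]
  module

theorem sigma2_real_smul (r : ℝ) (ω : ↥(predual M)) :
    sigma2 M ((r : ℂ) • ω) = (r : ℂ) • sigma2 M ω := by
  rw [sigma2, sigma2, pstar_smul, Complex.conj_ofReal]
  module

theorem sigma1_I_smul (ω : ↥(predual M)) :
    sigma1 M (Complex.I • ω) = -sigma2 M ω := by
  rw [sigma1, sigma2, pstar_smul, Complex.conj_I]
  module

theorem sigma2_I_smul (ω : ↥(predual M)) :
    sigma2 M (Complex.I • ω) = sigma1 M ω := by
  rw [sigma1, sigma2, pstar_smul, Complex.conj_I]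
  have h : (-(Complex.I) / 2) • (Complex.I • ω - -Complex.I • pstar M ω)
      = ((-(Complex.I) / 2) * Complex.I) • (ω + pstar M ω) := by
    module
  rw [h]
  have h2 : (-(Complex.I) / 2) * Complex.I = ((2 : ℂ))⁻¹ := by
    rw [div_mul_eq_mul_div, neg_mul, Complex.I_mul_I]
    norm_num
  rw [h2]

theorem sigma1_pstar (ω : ↥(predual M)) : sigma1 M (pstar M ω) = sigma1 M ω := by
  rw [sigma1, sigma1, pstar_pstar, add_comm]

theorem sigma2_pstar (ω : ↥(predual M)) : sigma2 M (pstar M ω) = -sigma2 M ω := by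
  rw [sigma2, sigma2, pstar_pstar]
  module

theorem norm_sigma1_le (ω : ↥(predual M)) : ‖sigma1 M ω‖ ≤ ‖ω‖ := by
  rw [sigma1, norm_smul]
  have h1 : ‖((2 : ℂ))⁻¹‖ = 2⁻¹ := by norm_num
  rw [h1]
  have h2 : ‖ω + pstar M ω‖ ≤ ‖ω‖ + ‖ω‖ :=
    le_trans (norm_add_le _ _) (by linarith [norm_pstar_le M ω])
  linarith

theorem norm_sigma2_le (ω : ↥(predual M)) : ‖sigma2 M ω‖ ≤ ‖ω‖ := by
  rw [sigma2, norm_smul]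
  have h1 : ‖(-(Complex.I) / 2 : ℂ)‖ = 2⁻¹ := by
    rw [norm_div, norm_neg, Complex.norm_I]
    norm_num
  rw [h1]
  have h2 : ‖ω - pstar M ω‖ ≤ ‖ω‖ + ‖ω‖ :=
    le_trans (norm_sub_le _ _) (by linarith [norm_pstar_le M ω])
  linarith

/-- the vector functional as an element of the predual -/
def vecElem (ξ η : H) : ↥(predual M) := ⟨vecFunctional M ξ η, vecFunctional_mem_predual M ξ η⟩

theorem norm_vecFunctional_le (ξ η : H) : ‖vecFunctional M ξ η‖ ≤ ‖ξ‖ * ‖η‖ := by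
  refine ContinuousLinearMap.opNorm_le_bound _ (mul_nonneg (norm_nonneg _) (norm_nonneg _))
    fun x => ?_
  rw [vecFunctional_apply]
  calc ‖(inner ℂ η ((x : H →L[ℂ] H) ξ) : ℂ)‖ ≤ ‖η‖ * ‖(x : H →L[ℂ] H) ξ‖ :=
        norm_inner_le_norm _ _
    _ ≤ ‖η‖ * (‖(x : H →L[ℂ] H)‖ * ‖ξ‖) :=
        mul_le_mul_of_nonneg_left (ContinuousLinearMap.le_opNorm _ _) (norm_nonneg η)
    _ = ‖ξ‖ * ‖η‖ * ‖(x : H →L[ℂ] H)‖ := by ring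
    _ = ‖ξ‖ * ‖η‖ * ‖x‖ := rfl

theorem vecElem_add_right (ξ η η' : H) :
    vecElem M ξ (η + η') = vecElem M ξ η + vecElem M ξ η' :=
  Subtype.ext (by ext x; simp [vecElem, vecFunctional_apply, inner_add_left])

theorem vecElem_smul_right (c : ℂ) (ξ η : H) :
    vecElem M ξ (c • η) = conj c • vecElem M ξ η :=
  Subtype.ext (by ext x; simp [vecElem, vecFunctional_apply, inner_smul_left, mul_comm])

theorem vecElem_add_left (ξ ξ' η : H) :
    vecElem M (ξ + ξ') η = vecElem M ξ η + vecElem M ξ' η :=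
  Subtype.ext (by ext x; simp [vecElem, vecFunctional_apply, inner_add_right])

theorem vecElem_smul_left (c : ℂ) (ξ η : H) :
    vecElem M (c • ξ) η = c • vecElem M ξ η :=
  Subtype.ext (by ext x; simp [vecElem, vecFunctional_apply, inner_smul_right])

variable {M} in
/-- the sesquilinear form of `F` in its second argument, as a functional -/
def phiF (F : ↥(predual M) →L[ℂ] ℂ) (ξ : H) : H →L[ℂ] ℂ :=
  LinearMap.mkContinuous
    { toFun := fun η => conj (F (vecElem M ξ η))
      map_add' := fun a b => by
        show conj (F (vecElem M ξ (a + b))) = _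
        rw [vecElem_add_right, map_add, map_add]
      map_smul' := fun c a => by
        show conj (F (vecElem M ξ (c • a))) = (RingHom.id ℂ) c • conj (F (vecElem M ξ a))
        rw [vecElem_smul_right, map_smul, smul_eq_mul, map_mul, Complex.conj_conj,
          RingHom.id_apply, smul_eq_mul] }
    (‖F‖ * ‖ξ‖) (fun η => by
      show ‖conj (F (vecElem M ξ η))‖ ≤ ‖F‖ * ‖ξ‖ * ‖η‖
      rw [RCLike.norm_conj]
      calc ‖F (vecElem M ξ η)‖ ≤ ‖F‖ * ‖vecElem M ξ η‖ := F.le_opNorm _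
        _ ≤ ‖F‖ * (‖ξ‖ * ‖η‖) :=
            mul_le_mul_of_nonneg_left (norm_vecFunctional_le M ξ η) (norm_nonneg F)
        _ = ‖F‖ * ‖ξ‖ * ‖η‖ := by ring)

variable {M} in
/-- underlying function of the operator representing `F` -/
def mFun (F : ↥(predual M) →L[ℂ] ℂ) (ξ : H) : H :=
  (InnerProductSpace.toDual ℂ H).symm (phiF F ξ)

variable {M} in
theorem inner_mFun (F : ↥(predual M) →L[ℂ] ℂ) (ξ η : H) :
    (inner ℂ η (mFun F ξ) : ℂ) = F (vecElem M ξ η) := by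
  have h1 : InnerProductSpace.toDual ℂ H (mFun F ξ) = phiF F ξ :=
    LinearIsometryEquiv.apply_symm_apply _ _
  have h3 : (inner ℂ (mFun F ξ) η : ℂ) = conj (F (vecElem M ξ η)) := by
    rw [← InnerProductSpace.toDual_apply_apply, h1]; rfl
  rw [← inner_conj_symm, h3, Complex.conj_conj]

variable {M} in
theorem norm_mFun_le (F : ↥(predual M) →L[ℂ] ℂ) (ξ : H) : ‖mFun F ξ‖ ≤ ‖F‖ * ‖ξ‖ := by
  have h1 : ‖mFun F ξ‖ = ‖phiF F ξ‖ := LinearIsometryEquiv.norm_map _ _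
  rw [h1]
  exact LinearMap.mkContinuous_norm_le _ (mul_nonneg (norm_nonneg F) (norm_nonneg ξ)) _

variable {M} in
theorem mFun_add (F : ↥(predual M) →L[ℂ] ℂ) (ξ ξ' : H) :
    mFun F (ξ + ξ') = mFun F ξ + mFun F ξ' := by
  apply ext_inner_left ℂ; intro v
  rw [inner_add_right, inner_mFun, inner_mFun, inner_mFun, vecElem_add_left, map_add]

variable {M} in
theorem mFun_smul (F : ↥(predual M) →L[ℂ] ℂ) (c : ℂ) (ξ : H) :
    mFun F (c • ξ) = c • mFun F ξ := by
  apply ext_inner_left ℂ; intro v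
  rw [inner_smul_right, inner_mFun, inner_mFun, vecElem_smul_left, map_smul, smul_eq_mul]

variable {M} in
/-- the operator representing `F` -/
def mOp (F : ↥(predual M) →L[ℂ] ℂ) : H →L[ℂ] H :=
  LinearMap.mkContinuous
    { toFun := mFun F
      map_add' := mFun_add F
      map_smul' := fun c x => by rw [RingHom.id_apply]; exact mFun_smul F c x }
    ‖F‖ (fun ξ => norm_mFun_le F ξ)

variable {M} in
theorem mOp_apply (F : ↥(predual M) →L[ℂ] ℂ) (ξ : H) : mOp F ξ = mFun F ξ := rfl

variable {M} in
theorem inner_mOp (F : ↥(predual M) →L[ℂ] ℂ) (ξ η : H) :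
    (inner ℂ η (mOp F ξ) : ℂ) = F (vecElem M ξ η) := inner_mFun F ξ η

variable {M} in
theorem mOp_mem (F : ↥(predual M) →L[ℂ] ℂ) : mOp F ∈ M := by
  suffices hmem : mOp F ∈ M.commutant.commutant by
    rwa [VonNeumannAlgebra.commutant_commutant] at hmem
  rw [VonNeumannAlgebra.mem_commutant_iff]
  intro a ha
  ext ξ
  rw [ContinuousLinearMap.mul_apply, ContinuousLinearMap.mul_apply]
  apply ext_inner_left ℂ; intro η
  have hv : vecElem M (a ξ) η = vecElem M ξ (ContinuousLinearMap.adjoint a η) := by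
    refine Subtype.ext (ContinuousLinearMap.ext fun x => ?_)
    show (inner ℂ η ((x : H →L[ℂ] H) (a ξ)) : ℂ)
        = inner ℂ (ContinuousLinearMap.adjoint a η) ((x : H →L[ℂ] H) ξ)
    have hcomm : (x : H →L[ℂ] H) * a = a * (x : H →L[ℂ] H) :=
      (VonNeumannAlgebra.mem_commutant_iff.mp ha) _ x.2
    have h1 : (x : H →L[ℂ] H) (a ξ) = a ((x : H →L[ℂ] H) ξ) := by
      rw [← ContinuousLinearMap.mul_apply, hcomm, ContinuousLinearMap.mul_apply]
    rw [h1, ← ContinuousLinearMap.adjoint_inner_left]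
  rw [← ContinuousLinearMap.adjoint_inner_left, inner_mOp, inner_mOp, hv]

variable {M} in
theorem F_eq_eval (F : ↥(predual M) →L[ℂ] ℂ) (ω : ↥(predual M)) :
    F ω = (ω : ↥(carrier M) →L[ℂ] ℂ) ⟨mOp F, mOp_mem F⟩ := by
  set m : ↥(carrier M) := ⟨mOp F, mOp_mem F⟩ with hm
  have hdense : Dense {ω : ↥(predual M) |
      (ω : ↥(carrier M) →L[ℂ] ℂ) ∈ Submodule.span ℂ (vfSet M)} := by
    intro ψ
    have himg : (Subtype.val '' {ω : ↥(predual M) |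
        (ω : ↥(carrier M) →L[ℂ] ℂ) ∈ Submodule.span ℂ (vfSet M)})
        = (Submodule.span ℂ (vfSet M) : Set (↥(carrier M) →L[ℂ] ℂ)) := by
      ext φ
      constructor
      · rintro ⟨ω, hω, rfl⟩; exact hω
      · intro hφ; exact ⟨⟨φ, span_le_predual M hφ⟩, hφ, rfl⟩
    rw [closure_subtype, himg]
    exact ψ.2
  have heq : Set.EqOn (fun ω : ↥(predual M) => F ω)
      (fun ω : ↥(predual M) => (ω : ↥(carrier M) →L[ℂ] ℂ) m)
      {ω : ↥(predual M) | (ω : ↥(carrier M) →L[ℂ] ℂ) ∈ Submodule.span ℂ (vfSet M)} := by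
    intro ω hω
    have key : ∀ (φ : ↥(carrier M) →L[ℂ] ℂ) (hφ : φ ∈ Submodule.span ℂ (vfSet M))
        (h : φ ∈ predual M), F ⟨φ, h⟩ = φ m := by
      intro φ hφ
      refine Submodule.span_induction
        (p := fun φ _ => ∀ h : φ ∈ predual M, F ⟨φ, h⟩ = φ m) ?_ ?_ ?_ ?_ hφ
      · rintro ψ ⟨ξ, η, rfl⟩ h
        have h1 : (⟨vecFunctional M ξ η, h⟩ : ↥(predual M)) = vecElem M ξ η := rfl
        rw [h1, ← inner_mOp F ξ η]
        rfl
      · intro h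
        have h1 : (⟨0, h⟩ : ↥(predual M)) = 0 := rfl
        rw [h1, map_zero]
        simp
      · intro φ ψ hφs hψs ihφ ihψ h
        have h1 : (⟨φ + ψ, h⟩ : ↥(predual M))
            = ⟨φ, span_le_predual M hφs⟩ + ⟨ψ, span_le_predual M hψs⟩ := rfl
        rw [h1, map_add, ihφ (span_le_predual M hφs), ihψ (span_le_predual M hψs)]
        simp
      · intro c φ hφs ihφ h
        have h1 : (⟨c • φ, h⟩ : ↥(predual M)) = c • ⟨φ, span_le_predual M hφs⟩ := rfl
        rw [h1, map_smul, ihφ (span_le_predual M hφs)]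
        simp
    exact key ↑ω hω ω.2
  have hcont2 : Continuous (fun ω : ↥(predual M) => (ω : ↥(carrier M) →L[ℂ] ℂ) m) :=
    ((ContinuousLinearMap.apply ℂ ℂ m).comp (predual M).subtypeL).continuous
  have := Continuous.ext_on hdense F.continuous hcont2 heq
  exact congrFun this ω

variable {M} in
theorem mOp_selfAdjoint (F : ↥(predual M) →L[ℂ] ℂ)
    (hF : ∀ ω, F (pstar M ω) = conj (F ω)) : IsSelfAdjoint (mOp F) := by
  rw [IsSelfAdjoint, ContinuousLinearMap.star_eq_adjoint]
  ext ξ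
  apply ext_inner_left ℂ; intro η
  rw [ContinuousLinearMap.adjoint_inner_right]
  have h1 : (inner ℂ (mOp F η) ξ : ℂ) = conj (F (vecElem M η ξ)) := by
    rw [← inner_conj_symm, inner_mOp]
  have h2 : pstar M (vecElem M η ξ) = vecElem M ξ η :=
    Subtype.ext (starOmega_vecFunctional M η ξ)
  rw [h1, ← hF, h2, inner_mOp]



variable {M} in
/-- first self-adjoint component, in `predualSA` -/
def s1 (ω : ↥(predual M)) : ↥(predualSA M) := ⟨sigma1 M ω, sigma1_mem M ω⟩

variable {M} in
/-- second self-adjoint component, in `predualSA` -/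
def s2 (ω : ↥(predual M)) : ↥(predualSA M) := ⟨sigma2 M ω, sigma2_mem M ω⟩

theorem s1_add (a b : ↥(predual M)) : s1 (a + b) = s1 a + s1 b :=
  Subtype.ext (sigma1_add M a b)

theorem s2_add (a b : ↥(predual M)) : s2 (a + b) = s2 a + s2 b :=
  Subtype.ext (sigma2_add M a b)

theorem s1_real_smul (r : ℝ) (ω : ↥(predual M)) : s1 ((r : ℂ) • ω) = r • s1 ω :=
  Subtype.ext (by
    show sigma1 M ((r : ℂ) • ω) = r • sigma1 M ω
    rw [sigma1_real_smul, real_smul_predual])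

theorem s2_real_smul (r : ℝ) (ω : ↥(predual M)) : s2 ((r : ℂ) • ω) = r • s2 ω :=
  Subtype.ext (by
    show sigma2 M ((r : ℂ) • ω) = r • sigma2 M ω
    rw [sigma2_real_smul, real_smul_predual])

theorem s1_I_smul (ω : ↥(predual M)) : s1 (Complex.I • ω) = -s2 ω :=
  Subtype.ext (sigma1_I_smul M ω)

theorem s2_I_smul (ω : ↥(predual M)) : s2 (Complex.I • ω) = s1 ω :=
  Subtype.ext (sigma2_I_smul M ω)

variable {M} in
/-- the complexification of `f` -/
def Gfun (f : ↥(predualSA M) →L[ℝ] ℝ) (ω : ↥(predual M)) : ℂ :=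
  ((f (s1 ω) : ℝ) : ℂ) + Complex.I * ((f (s2 ω) : ℝ) : ℂ)

variable {M} in
theorem Gfun_add (f : ↥(predualSA M) →L[ℝ] ℝ) (a b : ↥(predual M)) :
    Gfun f (a + b) = Gfun f a + Gfun f b := by
  rw [Gfun, Gfun, Gfun, s1_add, s2_add, map_add, map_add]
  push_cast
  ring

variable {M} in
theorem Gfun_real_smul (f : ↥(predualSA M) →L[ℝ] ℝ) (r : ℝ) (ω : ↥(predual M)) :
    Gfun f ((r : ℂ) • ω) = r * Gfun f ω := by
  rw [Gfun, Gfun, s1_real_smul, s2_real_smul, map_smul, map_smul, smul_eq_mul, smul_eq_mul]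
  push_cast
  ring

variable {M} in
theorem Gfun_I_smul (f : ↥(predualSA M) →L[ℝ] ℝ) (ω : ↥(predual M)) :
    Gfun f (Complex.I • ω) = Complex.I * Gfun f ω := by
  rw [Gfun, Gfun, s1_I_smul, s2_I_smul, map_neg]
  push_cast
  linear_combination (-((f (s2 ω) : ℝ) : ℂ)) * Complex.I_sq

variable {M} in
theorem Gfun_smul (f : ↥(predualSA M) →L[ℝ] ℝ) (c : ℂ) (ω : ↥(predual M)) :
    Gfun f (c • ω) = c * Gfun f ω := by
  have hc : c • ω = ((c.re : ℂ)) • ω + ((c.im : ℂ)) • (Complex.I • ω) := by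
    rw [smul_smul, ← add_smul]
    congr 1
    exact (Complex.re_add_im c).symm
  rw [hc, Gfun_add, Gfun_real_smul, Gfun_real_smul, Gfun_I_smul]
  have hc2 : c = (c.re : ℂ) + (c.im : ℂ) * Complex.I := (Complex.re_add_im c).symm
  conv_rhs => rw [hc2]
  ring

variable {M} in
theorem Gfun_bound (f : ↥(predualSA M) →L[ℝ] ℝ) (ω : ↥(predual M)) :
    ‖Gfun f ω‖ ≤ 2 * ‖f‖ * ‖ω‖ := by
  have h1 : ‖s1 ω‖ ≤ ‖ω‖ := norm_sigma1_le M ω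
  have h2 : ‖s2 ω‖ ≤ ‖ω‖ := norm_sigma2_le M ω
  have hf1 : ‖f (s1 ω)‖ ≤ ‖f‖ * ‖ω‖ :=
    le_trans (f.le_opNorm _) (mul_le_mul_of_nonneg_left h1 (norm_nonneg f))
  have hf2 : ‖f (s2 ω)‖ ≤ ‖f‖ * ‖ω‖ :=
    le_trans (f.le_opNorm _) (mul_le_mul_of_nonneg_left h2 (norm_nonneg f))
  calc ‖Gfun f ω‖ ≤ ‖((f (s1 ω) : ℝ) : ℂ)‖ + ‖Complex.I * ((f (s2 ω) : ℝ) : ℂ)‖ :=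
        norm_add_le _ _
    _ = ‖f (s1 ω)‖ + ‖f (s2 ω)‖ := by
        rw [norm_mul, Complex.norm_I, one_mul, Complex.norm_real, Complex.norm_real]
    _ ≤ ‖f‖ * ‖ω‖ + ‖f‖ * ‖ω‖ := add_le_add hf1 hf2
    _ = 2 * ‖f‖ * ‖ω‖ := by ring

variable {M} in
/-- the complexification of `f` as a continuous linear functional -/
def GfL (f : ↥(predualSA M) →L[ℝ] ℝ) : ↥(predual M) →L[ℂ] ℂ :=
  LinearMap.mkContinuous
    { toFun := Gfun f
      map_add' := Gfun_add f
      map_smul' := fun c ω => by rw [RingHom.id_apply, smul_eq_mul]; exact Gfun_smul f c ω }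
    (2 * ‖f‖) (fun ω => Gfun_bound f ω)

variable {M} in
theorem GfL_apply (f : ↥(predualSA M) →L[ℝ] ℝ) (ω : ↥(predual M)) :
    GfL f ω = Gfun f ω := rfl

variable {M} in
theorem GfL_pstar (f : ↥(predualSA M) →L[ℝ] ℝ) (ω : ↥(predual M)) :
    GfL f (pstar M ω) = conj (GfL f ω) := by
  rw [GfL_apply, GfL_apply, Gfun, Gfun]
  have h1 : s1 (pstar M ω) = s1 ω := Subtype.ext (sigma1_pstar M ω)
  have h2 : s2 (pstar M ω) = -s2 ω := Subtype.ext (sigma2_pstar M ω)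
  rw [h1, h2, map_neg, map_add, map_mul, Complex.conj_I, Complex.conj_ofReal,
    Complex.conj_ofReal]
  push_cast
  ring

variable {M} in
theorem GfL_on_sa (f : ↥(predualSA M) →L[ℝ] ℝ) (ω : ↥(predualSA M)) :
    GfL f (ω : ↥(predual M)) = ((f ω : ℝ) : ℂ) := by
  have hfix : pstar M (ω : ↥(predual M)) = (ω : ↥(predual M)) :=
    (mem_predualSA_iff M).mp ω.2
  have hs1 : s1 (ω : ↥(predual M)) = ω := by
    refine Subtype.ext ?_
    show sigma1 M (ω : ↥(predual M)) = (ω : ↥(predual M))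
    rw [sigma1, hfix, ← two_smul ℂ, smul_smul]
    norm_num
  have hs2 : s2 (ω : ↥(predual M)) = 0 := by
    refine Subtype.ext ?_
    show sigma2 M (ω : ↥(predual M)) = 0
    rw [sigma2, hfix, sub_self, smul_zero]
  rw [GfL_apply, Gfun, hs1, hs2, map_zero]
  push_cast
  ring

theorem vecElem_self_mem_sa (ξ : H) : vecElem M ξ ξ ∈ predualSA M := by
  rw [mem_predualSA_iff]
  refine Subtype.ext (ContinuousLinearMap.ext fun x => ?_)
  show conj ((vecFunctional M ξ ξ) (mstar M x)) = (vecFunctional M ξ ξ) x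
  rw [vecFunctional_apply, vecFunctional_apply]
  have h1 : ((mstar M x : ↥(carrier M)) : H →L[ℂ] H)
      = ContinuousLinearMap.adjoint (x : H →L[ℂ] H) :=
    ContinuousLinearMap.star_eq_adjoint _
  rw [h1, ContinuousLinearMap.adjoint_inner_right, inner_conj_symm]

/-- The map `Ψ : M_{sa} → (M_*^{sa})^*`, `Ψ(x)(ω) = Re (ω x)`. -/
def Psi (m : ↥(carrier M)) : ↥(predualSA M) →L[ℝ] ℝ :=
  (Complex.reCLM.comp
    (((ContinuousLinearMap.apply ℂ ℂ m).restrictScalars ℝ).comp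
      ((predual M).subtypeL.restrictScalars ℝ))).comp (predualSA M).subtypeL



/-- **Proposition.** The map `Ψ : M_{sa} → (M_*^{sa})^*` defined by `Ψ(x)(ω) = Re (ω x)`
is a surjective real-linear isometry from the self-adjoint part of `M` onto the dual of
the real Banach space `M_*^{sa}`. -/
theorem psi_surjective_isometry :
    (∀ (m : ↥(carrier M)) (ω : ↥(predualSA M)),
      Psi M m ω = (((ω : ↥(predual M)) : ↥(carrier M) →L[ℂ] ℂ) m).re) ∧
    (∀ m₁ m₂ : ↥(carrier M), Psi M (m₁ + m₂) = Psi M m₁ + Psi M m₂) ∧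
    (∀ (r : ℝ) (m : ↥(carrier M)), Psi M (r • m) = r • Psi M m) ∧
    (∀ m : ↥(carrier M), IsSelfAdjoint (m : H →L[ℂ] H) → ‖Psi M m‖ = ‖m‖) ∧
    (∀ f : ↥(predualSA M) →L[ℝ] ℝ,
      ∃ m : ↥(carrier M), IsSelfAdjoint (m : H →L[ℂ] H) ∧ Psi M m = f) := by
  have hPsi : ∀ (m : ↥(carrier M)) (ω : ↥(predualSA M)),
      Psi M m ω = (((ω : ↥(predual M)) : ↥(carrier M) →L[ℂ] ℂ) m).re := fun _ _ => rfl
  refine ⟨hPsi, ?_, ?_, ?_, ?_⟩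
  · intro m₁ m₂
    ext ω
    rw [ContinuousLinearMap.add_apply, hPsi, hPsi, hPsi, map_add, Complex.add_re]
  · intro r m
    ext ω
    rw [ContinuousLinearMap.smul_apply, hPsi, hPsi, ContinuousLinearMap.map_smul_of_tower,
      Complex.smul_re, smul_eq_mul]
  · intro m hm
    refine le_antisymm ?_ ?_
    · refine ContinuousLinearMap.opNorm_le_bound _ (norm_nonneg m) fun ω => ?_
      rw [hPsi]
      calc ‖(((ω : ↥(predual M)) : ↥(carrier M) →L[ℂ] ℂ) m).re‖
          ≤ ‖((ω : ↥(predual M)) : ↥(carrier M) →L[ℂ] ℂ) m‖ := by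
            rw [Real.norm_eq_abs]
            exact Complex.abs_re_le_norm _
        _ ≤ ‖((ω : ↥(predual M)) : ↥(carrier M) →L[ℂ] ℂ)‖ * ‖m‖ :=
            ContinuousLinearMap.le_opNorm _ _
        _ = ‖m‖ * ‖ω‖ := mul_comm _ _
    · show ‖(m : H →L[ℂ] H)‖ ≤ ‖Psi M m‖
      refine norm_le_of_sa hm fun ξ hξ => ?_
      set ω : ↥(predualSA M) := ⟨vecElem M ξ ξ, vecElem_self_mem_sa M ξ⟩ with hω
      have hval : Psi M m ω = (inner ℂ ξ ((m : H →L[ℂ] H) ξ) : ℂ).re := rfl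
      have hsym := ContinuousLinearMap.isSelfAdjoint_iff_isSymmetric.mp hm
      have hconj : conj (inner ℂ ξ ((m : H →L[ℂ] H) ξ) : ℂ) = inner ℂ ξ ((m : H →L[ℂ] H) ξ) := by
        rw [inner_conj_symm]
        exact hsym ξ ξ
      have hre : ((inner ℂ ξ ((m : H →L[ℂ] H) ξ) : ℂ).re : ℂ)
          = inner ℂ ξ ((m : H →L[ℂ] H) ξ) := Complex.conj_eq_iff_re.mp hconj
      have hnorm : ‖(inner ℂ ξ ((m : H →L[ℂ] H) ξ) : ℂ)‖ = ‖Psi M m ω‖ := by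
        rw [hval, ← hre, Complex.norm_real]
        rfl
      have hωnorm : ‖ω‖ ≤ 1 := by
        have : ‖ω‖ = ‖vecFunctional M ξ ξ‖ := rfl
        rw [this]
        refine le_trans (norm_vecFunctional_le M ξ ξ) ?_
        nlinarith [norm_nonneg ξ]
      calc ‖(inner ℂ ξ ((m : H →L[ℂ] H) ξ) : ℂ)‖ = ‖Psi M m ω‖ := hnorm
        _ ≤ ‖Psi M m‖ * ‖ω‖ := (Psi M m).le_opNorm _
        _ ≤ ‖Psi M m‖ * 1 := mul_le_mul_of_nonneg_left hωnorm (norm_nonneg _)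
        _ = ‖Psi M m‖ := mul_one _
  · intro f
    set F : ↥(predual M) →L[ℂ] ℂ := GfL f with hF
    refine ⟨⟨mOp F, mOp_mem F⟩, mOp_selfAdjoint F (GfL_pstar f), ?_⟩
    ext ω
    rw [hPsi, ← F_eq_eval F (ω : ↥(predual M)), hF, GfL_on_sa]
    rw [Complex.ofReal_re]


end Paper
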